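/- For all sufficiently large n, the polynomial f(x) = x(1+x)^{2n} + x^{2n} − x (the total domination polynomial of the friendship graph F_n) has a real root in the open interval (−n, −ln n). -/

import Mathlib

set_option maxHeartbeats 1000000 in
theorem friendship_polynomial_real_root_interval :
    ∃ N : ℕ, ∀ n : ℕ, N ≤ n →
      ∃ x : ℝ, -(n : ℝ) < x ∧ x < -Real.log n ∧
        x * (1 + x) ^ (2 * n) + x ^ (2 * n) - x = 0 := by
  use 200
  intro n hn
  have hN200 : (200:ℝ) ≤ (n:ℝ) := by exact_mod_cast hn
  set N : ℝ := (n:ℝ) with hNdef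
  have hNpos : (0:ℝ) < N := by linarith
  set L : ℝ := Real.log N with hLdef
  have hL1 : 1 < L := by
    have he : Real.exp 1 < N := by
      have := Real.exp_one_lt_d9
      linarith
    exact (Real.lt_log_iff_exp_lt hNpos).2 he
  have hLN : L < N := by
    have := Real.log_le_sub_one_of_pos hNpos
    linarith
  have hab : -N < -L := by linarith
  -- even power facts
  have hevN : (1 + -N) ^ (2*n) = (N - 1) ^ (2*n) := by
    rw [show (1 + -N) = -(N - 1) by ring, Even.neg_pow (even_two_mul n)]
  have hevL : (1 + -L) ^ (2*n) = (L - 1) ^ (2*n) := by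
    rw [show (1 + -L) = -(L - 1) by ring, Even.neg_pow (even_two_mul n)]
  have hNev : (-N) ^ (2*n) = N ^ (2*n) := Even.neg_pow (even_two_mul n) N
  have hLev : (-L) ^ (2*n) = L ^ (2*n) := Even.neg_pow (even_two_mul n) L
  set f : ℝ → ℝ := fun x => x * (1 + x) ^ (2 * n) + x ^ (2 * n) - x with hf
  have hfc : ContinuousOn f (Set.Icc (-N) (-L)) := by
    apply Continuous.continuousOn
    fun_prop
  ---- Part (A): f(-N) < 0
  have hA : f (-N) < 0 := by
    show (-N) * (1 + -N) ^ (2*n) + (-N) ^ (2*n) - (-N) < 0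
    rw [hevN, hNev]
    -- key: N^(2n) ≤ (N-1)^(2n) * exp 4
    have hM1 : (0:ℝ) < N - 1 := by linarith
    have hstep : N ≤ (N-1) * Real.exp (1/(N-1)) := by
      have h1 : 1/(N-1) + 1 ≤ Real.exp (1/(N-1)) := Real.add_one_le_exp _
      have h2 : (N-1) * (1/(N-1) + 1) ≤ (N-1) * Real.exp (1/(N-1)) :=
        mul_le_mul_of_nonneg_left h1 (by linarith)
      have h3 : (N-1) * (1/(N-1) + 1) = N := by field_simp; ring
      linarith
    have hpow : N^(2*n) ≤ ((N-1) * Real.exp (1/(N-1)))^(2*n) :=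
      pow_le_pow_left₀ hNpos.le hstep _
    have hsplit : ((N-1) * Real.exp (1/(N-1)))^(2*n)
        = (N-1)^(2*n) * Real.exp ((2*n : ℕ) * (1/(N-1))) := by
      rw [mul_pow, ← Real.exp_nat_mul]
    have hexp4 : Real.exp ((2*n : ℕ) * (1/(N-1))) ≤ Real.exp 4 := by
      apply Real.exp_le_exp.2
      have hc : ((2*n : ℕ):ℝ) * (1/(N-1)) = 2*N/(N-1) := by
        push_cast
        ring
      rw [hc, div_le_iff₀ hM1]
      linarith
    have hP0 : (0:ℝ) ≤ (N-1)^(2*n) := by positivity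
    have key : N^(2*n) ≤ (N-1)^(2*n) * Real.exp 4 := by
      calc N^(2*n) ≤ ((N-1) * Real.exp (1/(N-1)))^(2*n) := hpow
        _ = (N-1)^(2*n) * Real.exp ((2*n : ℕ) * (1/(N-1))) := hsplit
        _ ≤ (N-1)^(2*n) * Real.exp 4 := mul_le_mul_of_nonneg_left hexp4 hP0
    have h55 : Real.exp 4 < 55 := by
      have he1 : Real.exp 1 < 2.7182818286 := Real.exp_one_lt_d9
      have h4 : Real.exp 4 = (Real.exp 1)^4 := by
        rw [← Real.exp_nat_mul]
        norm_num
      have hlt : (Real.exp 1)^4 < (2.7182818286:ℝ)^4 := by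
        apply pow_lt_pow_left₀ he1 (Real.exp_pos 1).le
        norm_num
      rw [h4]
      nlinarith [hlt]
    have hpow2 : (N-1)^2 ≤ (N-1)^(2*n) := by
      apply pow_le_pow_right₀ (by linarith : (1:ℝ) ≤ N-1)
      omega
    have hmul : (N - 55) * (N-1)^2 ≤ (N - 55) * (N-1)^(2*n) :=
      mul_le_mul_of_nonneg_left hpow2 (by linarith)
    nlinarith [key, h55, hP0, hmul]
  ---- Part (B): f(-L) > 0
  have hLm : (0:ℝ) < L - 1 := by linarith
  have hB : 0 < f (-L) := by
    show 0 < (-L) * (1 + -L) ^ (2*n) + (-L) ^ (2*n) - (-L)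
    rw [hevL, hLev]
    -- (L-1)^2 < 2*N
    have hsN0 : (0:ℝ) < Real.sqrt N := Real.sqrt_pos.2 hNpos
    have hssN : (0:ℝ) < Real.sqrt (Real.sqrt N) := Real.sqrt_pos.2 hsN0
    have hs1 : Real.sqrt (Real.sqrt N) ^ 2 = Real.sqrt N := Real.sq_sqrt (Real.sqrt_nonneg N)
    have hs2 : Real.sqrt N ^ 2 = N := Real.sq_sqrt hNpos.le
    have h8 : 8 < Real.sqrt N := by nlinarith [Real.sqrt_nonneg N]
    have hsgt2 : 2 < Real.sqrt (Real.sqrt N) := by nlinarith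
    have hlog4 : L = 4 * Real.log (Real.sqrt (Real.sqrt N)) := by
      rw [hLdef, Real.log_sqrt (Real.sqrt_nonneg N), Real.log_sqrt hNpos.le]
      ring
    have h1 : Real.log (Real.sqrt (Real.sqrt N)) ≤ Real.sqrt (Real.sqrt N) - 1 :=
      Real.log_le_sub_one_of_pos hssN
    have hL4 : L ≤ 4 * Real.sqrt (Real.sqrt N) - 4 := by
      rw [hlog4]; linarith
    have hb : L - 1 ≤ 4 * Real.sqrt (Real.sqrt N) - 5 := by linarith
    have hsq : (L-1)^2 < 2*N := by
      have hq : (L-1)^2 ≤ (4 * Real.sqrt (Real.sqrt N) - 5)^2 :=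
        pow_le_pow_left₀ hLm.le hb 2
      have h16 : 16 * Real.sqrt N < 2 * N := by nlinarith [h8, hs2]
      nlinarith [hq, hs1, hsgt2, h16]
    -- Bernoulli
    have hbern : 1 + ((2*n : ℕ):ℝ) * (1/(L-1)) ≤ (1 + 1/(L-1))^(2*n) := by
      apply one_add_mul_le_pow
      have : (0:ℝ) < 1/(L-1) := by positivity
      linarith
    have hLpow : (L-1)^(2*n) * (1 + ((2*n : ℕ):ℝ) * (1/(L-1))) ≤ L^(2*n) := by
      have hsp : L^(2*n) = (L-1)^(2*n) * (1 + 1/(L-1))^(2*n) := by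
        rw [← mul_pow]
        congr 1
        field_simp
        ring
      rw [hsp]
      exact mul_le_mul_of_nonneg_left hbern (by positivity)
    have hgtL : L < 1 + ((2*n : ℕ):ℝ) * (1/(L-1)) := by
      have hc : ((2*n : ℕ):ℝ) * (1/(L-1)) = 2*N/(L-1) := by
        push_cast
        ring
      rw [hc]
      have : L - 1 < 2*N/(L-1) := by
        rw [lt_div_iff₀ hLm]
        nlinarith [hsq]
      linarith
    have hPL : (0:ℝ) < (L-1)^(2*n) := pow_pos hLm _
    have hfin : L * (L-1)^(2*n) < L^(2*n) := by
      calc L * (L-1)^(2*n) < (1 + ((2*n : ℕ):ℝ) * (1/(L-1))) * (L-1)^(2*n) :=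
            mul_lt_mul_of_pos_right hgtL hPL
        _ = (L-1)^(2*n) * (1 + ((2*n : ℕ):ℝ) * (1/(L-1))) := by ring
        _ ≤ L^(2*n) := hLpow
    nlinarith [hfin, hL1]
  -- IVT
  have hivt := intermediate_value_Ioo (le_of_lt hab) hfc
  have h0 : (0:ℝ) ∈ Set.Ioo (f (-N)) (f (-L)) := ⟨hA, hB⟩
  obtain ⟨x, hx, hfx⟩ := hivt h0
  exact ⟨x, hx.1, hx.2, hfx⟩
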